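/- Let m be the n-state single-action 'ring' MDP with deterministic cyclic transitions s_i → s_{i+1} (indices mod n) and rewards r(s_i) = g(i), and let m̃ be the 'false-ring' MDP on the same states where each state self-transitions with reward r̃(s_i) = R_n(s_i)/(Σ_{t=0}^{n-1} γ^t), where R_n(s_i) is the discounted n-step return from s_i in the ring. Then for every function v : S → ℝ, T̃^n v = T^n v; i.e., the false-ring is order-n value equivalent to the ring with respect to all functions. -/

import Mathlib

open Function

open Fin.NatCast in
/-- The false-ring MDP is order-n value equivalent to the n-state ring MDP with
respect to all functions: T̃^n v = T^n v for every v. Here T is the ring's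
Bellman operator (cyclic transitions, reward g), T̃ the false-ring's
(self-loops, reward R_n(s) / Σ_{t<n} γ^t where R_n is the discounted n-step
return of the ring). -/
theorem false_ring_order_n_VE (n : ℕ) [NeZero n]
    (γ : ℝ) (h0 : 0 ≤ γ) (h1 : γ < 1)
    (g : Fin n → ℝ)
    (T Tm : (Fin n → ℝ) → (Fin n → ℝ))
    (hT : ∀ (v : Fin n → ℝ) (s : Fin n), T v s = g s + γ * v (s + 1))
    (R : Fin n → ℝ)
    (hR : ∀ s : Fin n, R s = ∑ t ∈ Finset.range n, γ ^ t * g (s + (t : Fin n)))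
    (hTm : ∀ (v : Fin n → ℝ) (s : Fin n),
      Tm v s = R s / (∑ t ∈ Finset.range n, γ ^ t) + γ * v s) :
    ∀ v : Fin n → ℝ, Tm^[n] v = T^[n] v := by
  intro v
  have hTk : ∀ (k : ℕ) (v : Fin n → ℝ) (s : Fin n),
      T^[k] v s = (∑ t ∈ Finset.range k, γ ^ t * g (s + (t : Fin n)))
        + γ ^ k * v (s + (k : Fin n)) := by
    intro k
    induction k with
    | zero => intro v s; simp
    | succ k ih =>
      intro v s
      rw [Function.iterate_succ_apply', hT, ih v (s + 1), Finset.sum_range_succ']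
      have hcast : ∀ t : ℕ, s + 1 + ((t : ℕ) : Fin n) = s + (((t + 1 : ℕ)) : Fin n) := by
        intro t; push_cast; abel
      have hsum : (∑ t ∈ Finset.range k, γ ^ t * g (s + 1 + (t : Fin n)))
          = ∑ t ∈ Finset.range k, γ ^ (t) * g (s + (((t + 1 : ℕ)) : Fin n)) := by
        refine Finset.sum_congr rfl fun t _ => by rw [hcast]
      have hc2 : s + 1 + ((k : ℕ) : Fin n) = s + (((k + 1 : ℕ)) : Fin n) := hcast k
      rw [hsum, hc2]
      have hd : ∑ x ∈ Finset.range k, γ ^ (x + 1) * g (s + (((x + 1 : ℕ)) : Fin n))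
          = γ * ∑ x ∈ Finset.range k, γ ^ x * g (s + (((x + 1 : ℕ)) : Fin n)) := by
        rw [Finset.mul_sum]; exact Finset.sum_congr rfl fun x _ => by ring
      push_cast at hd ⊢
      rw [hd]
      simp only [add_zero]
      ring
  have hTmk : ∀ (k : ℕ) (v : Fin n → ℝ) (s : Fin n),
      Tm^[k] v s = (∑ t ∈ Finset.range k, γ ^ t)
        * (R s / (∑ t ∈ Finset.range n, γ ^ t)) + γ ^ k * v s := by
    intro k
    induction k with
    | zero => intro v s; simp
    | succ k ih =>
      intro v s
      rw [Function.iterate_succ_apply', hTm, ih v s, Finset.sum_range_succ']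
      have hd : ∑ x ∈ Finset.range k, γ ^ (x + 1) = γ * ∑ x ∈ Finset.range k, γ ^ x := by
        rw [Finset.mul_sum]; exact Finset.sum_congr rfl fun x _ => by ring
      rw [hd]
      ring
  have hpos : (0 : ℝ) < ∑ t ∈ Finset.range n, γ ^ t := by
    have hn : 0 < n := Nat.pos_of_ne_zero (NeZero.ne n)
    apply Finset.sum_pos' (fun t _ => pow_nonneg h0 t)
    exact ⟨0, Finset.mem_range.mpr hn, by norm_num⟩
  funext s
  rw [hTk n v s, hTmk n v s, ← hR s, Fin.natCast_self, add_zero,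
    mul_div_cancel₀ _ (ne_of_gt hpos)]
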